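/- Let K be a field, A = J_2, and B ∈ M_3(K) with rank(B) = 2, σ_1(B) = σ_2(B) = σ_3(B) = 0, tr(AB) = 0 and tr(A²B²) = 0. Then one of the following holds: (1) B is strictly upper triangular, i.e. B = [[0, t_1, t_2],[0, 0, t_3],[0, 0, 0]] for some t_1, t_2, t_3 ∈ K; (2) B = T·A·T⁻¹ where T = [[t_3·t_4, t_1, t_2],[t_3, t_4, t_5],[0, 1, 0]] for some t_1,…,t_5 ∈ K with det(T) ≠ 0; (3) B = T·A·T⁻¹ where T = [[t_1, t_2, t_3·t_4],[t_3, 0, t_4],[1, 0, 0]] for some t_1,…,t_4 ∈ K with det(T) ≠ 0. -/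

import Mathlib

open Matrix

noncomputable section

/-- `σ_k(M)`: the signed coefficients of the characteristic polynomial,
`det (λ E - M) = λ^n - σ_1(M) λ^{n-1} + ⋯ + (-1)^n σ_n(M)`. -/
def sigmaC {R : Type} [CommRing R] {n : ℕ} (k : ℕ) (M : Matrix (Fin n) (Fin n) R) : R :=
  (-1) ^ k * (Matrix.charpoly M).coeff (n - k)

/-- The rank-one nilpotent Jordan matrix `J₁`. -/
def J1 (K : Type) [Field K] : Matrix (Fin 3) (Fin 3) K := !![0, 1, 0; 0, 0, 0; 0, 0, 0]

/-- The rank-two nilpotent Jordan matrix `J₂`. -/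
def J2 (K : Type) [Field K] : Matrix (Fin 3) (Fin 3) K := !![0, 1, 0; 0, 0, 1; 0, 0, 0]

lemma charpoly3 {K : Type} [Field K] (a b c d e f g h i : K) :
    (!![a,b,c;d,e,f;g,h,i] : Matrix (Fin 3) (Fin 3) K).charpoly
      = Polynomial.X^3 - Polynomial.C (a+e+i) * Polynomial.X^2
        + Polynomial.C (a*e - b*d + a*i - c*g + e*i - f*h) * Polynomial.X
        - Polynomial.C (a*e*i - a*f*h - b*d*i + b*f*g + c*d*h - c*e*g) := by
  rw [Matrix.charpoly, Matrix.det_fin_three]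
  simp [Matrix.charmatrix_apply, Matrix.one_apply]
  ring

lemma conj3 {K : Type} [Field K] (X T : Matrix (Fin 3) (Fin 3) K) (hdet : T.det ≠ 0)
    (hXT : X * T = T * J2 K) : X = T * J2 K * T⁻¹ := by
  rw [← hXT, Matrix.mul_assoc, Matrix.mul_nonsing_inv _ (isUnit_iff_ne_zero.mpr hdet),
    Matrix.mul_one]

set_option maxHeartbeats 1600000 in
/-- Lopatin's Lemma on rank-two matrices `B` orthogonal to `A = J₂`. -/
theorem lemma_J2_rank_two (K : Type) [Field K] (B : Matrix (Fin 3) (Fin 3) K)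
    (hrk : B.rank = 2) (h1 : sigmaC 1 B = 0) (h2 : sigmaC 2 B = 0) (h3 : sigmaC 3 B = 0)
    (htr : Matrix.trace (J2 K * B) = 0) (htr2 : Matrix.trace (J2 K ^ 2 * B ^ 2) = 0) :
    (∃ t1 t2 t3 : K, B = !![0, t1, t2; 0, 0, t3; 0, 0, 0]) ∨
      (∃ t1 t2 t3 t4 t5 : K,
        (!![t3 * t4, t1, t2; t3, t4, t5; 0, 1, 0] : Matrix (Fin 3) (Fin 3) K).det ≠ 0 ∧
        B = !![t3 * t4, t1, t2; t3, t4, t5; 0, 1, 0] * J2 K *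
          (!![t3 * t4, t1, t2; t3, t4, t5; 0, 1, 0])⁻¹) ∨
      (∃ t1 t2 t3 t4 : K,
        (!![t1, t2, t3 * t4; t3, 0, t4; 1, 0, 0] : Matrix (Fin 3) (Fin 3) K).det ≠ 0 ∧
        B = !![t1, t2, t3 * t4; t3, 0, t4; 1, 0, 0] * J2 K *
          (!![t1, t2, t3 * t4; t3, 0, t4; 1, 0, 0])⁻¹) := by
  obtain ⟨a,b,c,d,e,f,g,h,i, rfl⟩ : ∃ a b c d e f g h i, B = !![a,b,c;d,e,f;g,h,i] :=
    ⟨_,_,_,_,_,_,_,_,_, by ext x y; fin_cases x <;> fin_cases y <;> rfl⟩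
  have hc := charpoly3 a b c d e f g h i (K := K)
  have E1 : a + e + i = 0 := by
    simp only [sigmaC, hc, Polynomial.coeff_add, Polynomial.coeff_sub, Polynomial.coeff_C_mul,
      Polynomial.coeff_X_pow, Polynomial.coeff_X, Polynomial.coeff_C] at h1
    norm_num at h1
    linear_combination h1
  have E2 : a*e - b*d + a*i - c*g + e*i - f*h = 0 := by
    simp only [sigmaC, hc, Polynomial.coeff_add, Polynomial.coeff_sub, Polynomial.coeff_C_mul,
      Polynomial.coeff_X_pow, Polynomial.coeff_X, Polynomial.coeff_C] at h2
    norm_num at h2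
    linear_combination h2
  have E3 : a*e*i - a*f*h - b*d*i + b*f*g + c*d*h - c*e*g = 0 := by
    simp only [sigmaC, hc, Polynomial.coeff_add, Polynomial.coeff_sub, Polynomial.coeff_C_mul,
      Polynomial.coeff_X_pow, Polynomial.coeff_X, Polynomial.coeff_C] at h3
    norm_num at h3
    linear_combination h3
  have E4 : d + h = 0 := by
    simp [J2, Matrix.trace_fin_three, Matrix.mul_apply, Fin.sum_univ_three] at htr
    linear_combination htr
  have E5 : g*a + h*d + i*g = 0 := by
    simp [J2, Matrix.trace_fin_three, Matrix.mul_apply, Fin.sum_univ_three, pow_two,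
      Matrix.vecHead, Matrix.vecTail] at htr2
    linear_combination htr2
  have hr : d*h - e*g = 0 := by linear_combination E5 - g*E1
  by_cases hg : g = 0
  · -- strictly upper triangular case
    have hh : h = 0 := mul_self_eq_zero.mp (by linear_combination h*E4 - E5 + (a+i)*hg)
    have hd : d = 0 := by linear_combination E4 - hh
    have s2 : a*e + a*i + e*i = 0 := by linear_combination E2 + b*hd + c*hg + f*hh
    have s3 : a*e*i = 0 := by linear_combination E3 + (a*f - c*d)*hh + b*i*hd + (c*e - b*f)*hg
    have ha : a = 0 := pow_eq_zero_iff (n := 3) (by norm_num) |>.mp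
      (by linear_combination a^2*E1 - a*s2 + s3)
    have he : e = 0 := pow_eq_zero_iff (n := 3) (by norm_num) |>.mp
      (by linear_combination e^2*E1 - e*s2 + s3)
    have hi : i = 0 := pow_eq_zero_iff (n := 3) (by norm_num) |>.mp
      (by linear_combination i^2*E1 - i*s2 + s3)
    exact Or.inl ⟨b, c, f, by rw [ha, hd, he, hg, hh, hi]⟩
  · -- Cayley-Hamilton entry identities
    have h300 : c*g*i + c*d*h + b*f*g + b*d*e + 2*(a*c*g) + 2*(a*b*d) + a^3 = 0 := by
      linear_combination (c*g + b*d + a^2)*E1 - a*E2 + E3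
    have h301 : c*h*i + c*e*h + b*f*h + b*e^2 + b*c*g + b^2*d + a*c*h + a*b*e + a^2*b = 0 := by
      linear_combination (c*h + b*e + a*b)*E1 - b*E2
    have h310 : f*g*i + e*f*g + d*f*h + d*e^2 + c*d*g + b*d^2 + a*f*g + a*d*e + a^2*d = 0 := by
      linear_combination (f*g + d*e + a*d)*E1 - d*E2
    have h311 : f*h*i + 2*(e*f*h) + e^3 + c*d*h + b*f*g + 2*(b*d*e) + a*b*d = 0 := by
      linear_combination (f*h + e^2 + b*d)*E1 - e*E2 + E3
    have h320 : g*i^2 + f*g*h + d*h*i + d*e*h + c*g^2 + b*d*g + a*g*i + a*d*h + a^2*g = 0 := by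
      linear_combination (g*i + d*h + a*g)*E1 - g*E2
    have hde : d*d + e*g = 0 := by linear_combination d*E4 - hr
    by_cases hβ : a*h - b*g = 0
    · -- possible form 2
      have hPQ : g*(c*g + b*d + a^2) - d*(f*g + d*e + a*d) = 0 := by
        linear_combination h320 - i*E5 - (f*g + d*e + a*d)*E4
      by_cases hQ : f*g + d*e + a*d = 0
      · -- contradiction with rank
        exfalso
        have hP0 : c*g + b*d + a^2 = 0 :=
          (mul_eq_zero.mp (by linear_combination hPQ + d*hQ)).resolve_left hg
        have hS0 : c*h + b*e + a*b = 0 :=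
          (mul_eq_zero.mp (show g*(c*h + b*e + a*b) = 0 by
            linear_combination h*hP0 - a*hβ - b*hr)).resolve_left hg
        have hS1 : f*h + e^2 + b*d = 0 :=
          (mul_eq_zero.mp (show g*(f*h + e^2 + b*d) = 0 by
            linear_combination h*hQ - d*hβ - e*hr)).resolve_left hg
        have hS2 : h*i + e*h + b*g = 0 :=
          (mul_eq_zero.mp (show g*(h*i + e*h + b*g) = 0 by
            linear_combination h*E5 - g*hβ - h*hr)).resolve_left hg
        have hT0 : c*i + b*f + a*c = 0 :=
          (mul_eq_zero.mp (show g*(c*i + b*f + a*c) = 0 by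
            linear_combination h300 - a*hP0 - d*hS0)).resolve_left hg
        have hT1 : f*i + e*f + c*d = 0 :=
          (mul_eq_zero.mp (show g*(f*i + e*f + c*d) = 0 by
            linear_combination h310 - a*hQ - d*hS1)).resolve_left hg
        have hT2 : i^2 + f*h + c*g = 0 :=
          (mul_eq_zero.mp (show g*(i^2 + f*h + c*g) = 0 by
            linear_combination h320 - a*E5 - d*hS2)).resolve_left hg
        have hM2 : (!![a,b,c;d,e,f;g,h,i] : Matrix (Fin 3) (Fin 3) K)
            * !![a,b,c;d,e,f;g,h,i] = 0 := by
          ext x y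
          fin_cases x <;> fin_cases y <;>
            simp [Matrix.mul_apply, Fin.sum_univ_three]
          · linear_combination hP0
          · linear_combination hS0
          · linear_combination hT0
          · linear_combination hQ
          · linear_combination hS1
          · linear_combination hT1
          · linear_combination E5
          · linear_combination hS2
          · linear_combination hT2
        have hle := Matrix.rank_add_rank_le_card_of_mul_eq_zero hM2
        rw [hrk, Fintype.card_fin] at hle
        norm_num at hle
      · -- form 2
        have hQg : f*g + d*e + a*d ≠ 0 := hQ
        have hdet : (!![(f*g+d*e+a*d)/g * (d/g), a/g, 1/g;
            (f*g+d*e+a*d)/g, d/g, 0; 0, 1, 0] : Matrix (Fin 3) (Fin 3) K).det ≠ 0 := by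
          simp [Matrix.det_fin_three, Matrix.vecHead, Matrix.vecTail]
          exact ⟨hg, hQ, hg⟩
        have hBT : (!![a,b,c;d,e,f;g,h,i] : Matrix (Fin 3) (Fin 3) K)
            * !![(f*g+d*e+a*d)/g * (d/g), a/g, 1/g; (f*g+d*e+a*d)/g, d/g, 0; 0, 1, 0]
            = !![(f*g+d*e+a*d)/g * (d/g), a/g, 1/g; (f*g+d*e+a*d)/g, d/g, 0; 0, 1, 0]
              * J2 K := by
          ext x y
          fin_cases x <;> fin_cases y <;>
            simp [J2, Matrix.mul_apply, Fin.sum_univ_three, Matrix.vecHead, Matrix.vecTail] <;>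
            field_simp
          · linear_combination (f*g+d*e+a*d)*a*E4 - (f*g+d*e+a*d)*hβ
          · linear_combination hPQ
          · linear_combination (f*g+d*e+a*d)*hde
          · ring
          · linear_combination (f*g+d*e+a*d)*E4
          · linear_combination E5
        exact Or.inr (Or.inl ⟨a/g, 1/g, (f*g+d*e+a*d)/g, d/g, 0, hdet, conj3 _ _ hdet hBT⟩)
    · -- form 3
      have hP0 : c*g + b*d + a^2 = 0 :=
        (mul_eq_zero.mp (show (a*h - b*g)*(c*g + b*d + a^2) = 0 by
          linear_combination h*h300 - g*h301 - (c*h + b*e + a*b)*hr)).resolve_left hβ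
      have hQ0 : f*g + d*e + a*d = 0 :=
        (mul_eq_zero.mp (show (a*h - b*g)*(f*g + d*e + a*d) = 0 by
          linear_combination h*h310 - g*h311 - (f*h + e^2 + b*d)*hr)).resolve_left hβ
      have hdet : (!![a/g, 1/g, (d/g) * -(1/(a*h-b*g));
          d/g, 0, -(1/(a*h-b*g)); 1, 0, 0] : Matrix (Fin 3) (Fin 3) K).det ≠ 0 := by
        simp [Matrix.det_fin_three, Matrix.vecHead, Matrix.vecTail]
        exact ⟨hg, hβ⟩
      have hBT : (!![a,b,c;d,e,f;g,h,i] : Matrix (Fin 3) (Fin 3) K)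
          * !![a/g, 1/g, (d/g) * -(1/(a*h-b*g)); d/g, 0, -(1/(a*h-b*g)); 1, 0, 0]
          = !![a/g, 1/g, (d/g) * -(1/(a*h-b*g)); d/g, 0, -(1/(a*h-b*g)); 1, 0, 0] * J2 K := by
        ext x y
        fin_cases x <;> fin_cases y <;>
          simp [J2, Matrix.mul_apply, Fin.sum_univ_three, Matrix.vecHead, Matrix.vecTail] <;>
          field_simp
        · linear_combination hP0
        · rw [div_eq_one_iff_eq (by intro hx; exact hβ (by linear_combination hx))]
          linear_combination (-a)*E4
        · linear_combination hQ0
        · rw [show -d ^ 2 + -(g * e) = 0 by linear_combination -hde]; simp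
        · linear_combination E5
        · rw [show -d + -h = 0 by linear_combination -E4]; simp
      exact Or.inr (Or.inr ⟨a/g, 1/g, d/g, -(1/(a*h-b*g)), hdet, conj3 _ _ hdet hBT⟩)
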